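/- There exists a constant C > 0 such that for all positive integers N, |∑_{n=1}^{N} Φ(n) − (2^{N+1} − 2·2^{⌊N/2⌋} − 2·2^{⌊N/3⌋})| ≤ C·2^{N/5}, where 2^{N/5} denotes the real number 2 raised to the power N/5. -/

import Mathlib

/-- `Phi n` is the number of nonempty subsets of `{1, ..., n}` relatively prime to `n`. -/
def Phi (n : ℕ) : ℕ :=
  ((Finset.Icc 1 n).powerset.filter fun A => A.Nonempty ∧ (insert n A).gcd id = 1).card

open Finset ArithmeticFunction
open scoped ArithmeticFunction.Moebius

lemma sum_divisors_moebius (n : ℕ) :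
    (∑ d ∈ n.divisors, (μ d : ℤ)) = if n = 1 then 1 else 0 := by
  have := congrArg (fun f : ArithmeticFunction ℤ => f n) moebius_mul_coe_zeta
  simp only [coe_mul_zeta_apply, one_apply] at this
  exact this

lemma card_filter_dvd (n d : ℕ) :
    ((Finset.Icc 1 n).filter (fun k => d ∣ k)).card = n / d := by
  have h : Finset.Icc 1 n = Finset.Ioc 0 n := by ext x; simp; omega
  rw [h]
  exact Nat.Ioc_filter_dvd_card_eq_div n d

lemma phi_formula {n : ℕ} (hn : 0 < n) :
    (Phi n : ℤ) = ∑ d ∈ n.divisors, μ d * (2 ^ (n / d) - 1) := by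
  classical
  have hg0 : ∀ A : Finset ℕ, (insert n A).gcd _root_.id ∣ n := fun A =>
    Finset.gcd_dvd (f := _root_.id) (Finset.mem_insert_self n A)
  have hgne : ∀ A : Finset ℕ, (insert n A).gcd _root_.id ≠ 0 := fun A h => by
    have := hg0 A; rw [h] at this; exact hn.ne' (Nat.eq_zero_of_zero_dvd this)
  have h1 : (Phi n : ℤ)
      = (∑ A ∈ (Finset.Icc 1 n).powerset, if (insert n A).gcd _root_.id = 1 then (1:ℤ) else 0)
        - (if n = 1 then 1 else 0) := by
    have hmem : (∅ : Finset ℕ) ∈ (Finset.Icc 1 n).powerset :=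
      Finset.mem_powerset.2 (Finset.empty_subset _)
    rw [Phi, Finset.card_filter]
    push_cast
    rw [← Finset.sum_erase_add _ _ hmem,
      ← Finset.sum_erase_add _ (fun A => if (insert n A).gcd _root_.id = 1 then (1:ℤ) else 0) hmem]
    have hcong : ∀ A ∈ ((Finset.Icc 1 n).powerset).erase ∅,
        (if A.Nonempty ∧ (insert n A).gcd _root_.id = 1 then (1:ℤ) else 0)
          = if (insert n A).gcd _root_.id = 1 then (1:ℤ) else 0 := by
      intro A hA
      have : A.Nonempty := Finset.nonempty_of_ne_empty (Finset.ne_of_mem_erase hA)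
      simp [this]
    rw [Finset.sum_congr rfl hcong]
    have hempty : ((insert n (∅:Finset ℕ)).gcd _root_.id = 1) ↔ n = 1 := by
      simp
    by_cases hn1 : n = 1 <;> simp [hempty, hn1]
  have h2 : ∀ A ∈ (Finset.Icc 1 n).powerset,
      (if (insert n A).gcd _root_.id = 1 then (1:ℤ) else 0)
        = ∑ d ∈ n.divisors, if d ∣ (insert n A).gcd _root_.id then (μ d : ℤ) else 0 := by
    intro A hA
    set g := (insert n A).gcd _root_.id with hg
    have hdvd : g ∣ n := hg0 A
    have hgdiv : g.divisors = n.divisors.filter (· ∣ g) := by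
      ext e
      simp only [Nat.mem_divisors, Finset.mem_filter]
      constructor
      · rintro ⟨he, h0⟩; exact ⟨⟨he.trans hdvd, hn.ne'⟩, he⟩
      · rintro ⟨⟨_, _⟩, he⟩; exact ⟨he, hgne A⟩
    rw [← sum_divisors_moebius g, hgdiv, Finset.sum_filter]
  have h3 : ∑ A ∈ (Finset.Icc 1 n).powerset,
        ∑ d ∈ n.divisors, (if d ∣ (insert n A).gcd _root_.id then (μ d : ℤ) else 0)
      = ∑ d ∈ n.divisors, (μ d : ℤ) * 2 ^ (n / d) := by
    rw [Finset.sum_comm]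
    refine Finset.sum_congr rfl fun d hd => ?_
    obtain ⟨hdn, -⟩ := Nat.mem_divisors.1 hd
    have hiff : ∀ A ∈ (Finset.Icc 1 n).powerset,
        (d ∣ (insert n A).gcd _root_.id ↔ A ⊆ (Finset.Icc 1 n).filter (fun k => d ∣ k)) := by
      intro A hA
      rw [Finset.dvd_gcd_iff]
      constructor
      · intro h a ha
        exact Finset.mem_filter.2 ⟨Finset.mem_powerset.1 hA ha, h a (Finset.mem_insert_of_mem ha)⟩
      · intro h x hx
        rcases Finset.mem_insert.1 hx with rfl | hx
        · exact hdn
        · exact (Finset.mem_filter.1 (h hx)).2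
    have hfil : ((Finset.Icc 1 n).powerset).filter
          (fun A => A ⊆ (Finset.Icc 1 n).filter (fun k => d ∣ k))
        = ((Finset.Icc 1 n).filter (fun k => d ∣ k)).powerset := by
      ext B
      simp only [Finset.mem_filter, Finset.mem_powerset]
      exact ⟨fun h => h.2, fun h => ⟨h.trans (Finset.filter_subset _ _), h⟩⟩
    calc ∑ A ∈ (Finset.Icc 1 n).powerset, (if d ∣ (insert n A).gcd _root_.id then (μ d:ℤ) else 0)
        = ∑ A ∈ (Finset.Icc 1 n).powerset,
            (if A ⊆ (Finset.Icc 1 n).filter (fun k => d ∣ k) then (μ d:ℤ) else 0) :=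
          Finset.sum_congr rfl fun A hA => if_congr (hiff A hA) rfl rfl
      _ = (μ d : ℤ) * 2 ^ (n / d) := by
          rw [← Finset.sum_filter, hfil, Finset.sum_const, Finset.card_powerset, card_filter_dvd]
          push_cast
          ring
  rw [h1, Finset.sum_congr rfl h2, h3]
  have : ∑ d ∈ n.divisors, (μ d : ℤ) * (2 ^ (n / d) - 1)
      = ∑ d ∈ n.divisors, (μ d : ℤ) * 2 ^ (n / d) - ∑ d ∈ n.divisors, (μ d : ℤ) := by
    rw [← Finset.sum_sub_distrib]; congr 1; ext d; ring
  rw [this, sum_divisors_moebius]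

lemma geom (M : ℕ) : ∑ m ∈ Finset.Icc 1 M, ((2:ℤ)^m - 1) = 2^(M+1) - 2 - M := by
  induction M with
  | zero => simp
  | succ k ih =>
    rw [Finset.sum_Icc_succ_top (by omega), ih]
    push_cast; ring

lemma swap_sum (N : ℕ) (F : ℕ → ℕ → ℤ) :
    ∑ n ∈ Finset.Icc 1 N, ∑ d ∈ n.divisors, F d (n / d)
      = ∑ d ∈ Finset.Icc 1 N, ∑ m ∈ Finset.Icc 1 (N / d), F d m := by
  have h1 : ∀ n ∈ Finset.Icc 1 N, ∑ d ∈ n.divisors, F d (n / d)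
      = ∑ p ∈ n.divisorsAntidiagonal, F p.1 p.2 := fun n hn =>
    (Nat.sum_divisorsAntidiagonal F (n := n)).symm
  rw [Finset.sum_congr rfl h1,
    ← Finset.sum_sigma (Finset.Icc 1 N) (fun n => n.divisorsAntidiagonal)
      (fun p => F p.2.1 p.2.2),
    ← Finset.sum_sigma (Finset.Icc 1 N) (fun d => Finset.Icc 1 (N / d)) (fun p => F p.1 p.2)]
  refine Finset.sum_nbij' (fun p => ⟨p.2.1, p.2.2⟩)
    (fun p => ⟨p.1 * p.2, (p.1, p.2)⟩) ?_ ?_ ?_ ?_ ?_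
  · rintro ⟨n, d, m⟩ hp
    simp only [Finset.mem_sigma, Finset.mem_Icc, Nat.mem_divisorsAntidiagonal] at hp ⊢
    obtain ⟨⟨h1n, h2n⟩, hdm, hn0⟩ := hp
    subst hdm
    rw [Nat.mul_ne_zero_iff] at hn0
    refine ⟨⟨Nat.pos_of_ne_zero hn0.1, ?_⟩, Nat.pos_of_ne_zero hn0.2, ?_⟩
    · exact le_trans (Nat.le_mul_of_pos_right d (Nat.pos_of_ne_zero hn0.2)) h2n
    · exact (Nat.le_div_iff_mul_le (Nat.pos_of_ne_zero hn0.1)).2 (by rw [Nat.mul_comm]; exact h2n)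
  · rintro ⟨d, m⟩ hp
    simp only [Finset.mem_sigma, Finset.mem_Icc, Nat.mem_divisorsAntidiagonal] at hp ⊢
    obtain ⟨⟨h1d, h2d⟩, h1m, h2m⟩ := hp
    have hmul : m * d ≤ N := (Nat.le_div_iff_mul_le h1d).1 h2m
    rw [Nat.mul_comm] at hmul
    have hpos : 0 < d * m := Nat.mul_pos h1d h1m
    refine ⟨⟨hpos, by omega⟩, ?_⟩
    simp [Nat.mul_eq_zero]
    omega
  · rintro ⟨n, d, m⟩ hp
    simp only [Finset.mem_sigma, Finset.mem_Icc, Nat.mem_divisorsAntidiagonal] at hp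
    obtain ⟨-, hdm, -⟩ := hp
    simp [hdm]
  · rintro ⟨d, m⟩ hp
    rfl
  · rintro ⟨n, d, m⟩ hp
    rfl

lemma key (N : ℕ) :
    ∑ n ∈ Finset.Icc 1 N, (Phi n : ℤ)
      = ∑ d ∈ Finset.Icc 1 N, (μ d : ℤ) * (2 ^ (N / d + 1) - 2 - (N / d : ℕ)) := by
  have h : ∀ n ∈ Finset.Icc 1 N, (Phi n : ℤ)
      = ∑ d ∈ n.divisors, (μ d : ℤ) * ((2:ℤ) ^ (n / d) - 1) := fun n hn =>
    phi_formula (Finset.mem_Icc.1 hn).1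
  rw [Finset.sum_congr rfl h, swap_sum N (fun d m => (μ d : ℤ) * (2 ^ m - 1))]
  refine Finset.sum_congr rfl fun d hd => ?_
  rw [← Finset.mul_sum, geom]

lemma sq_growth (N : ℕ) (h : 1 ≤ N) :
    (N : ℝ) ^ 2 ≤ 5832000 * (2:ℝ) ^ ((N:ℝ)/30) := by
  have hlog : (1/2 : ℝ) ≤ Real.log 2 := by
    have := Real.log_two_gt_d9; norm_num at this ⊢; linarith
  have hN1 : (1:ℝ) ≤ (N:ℝ) := by exact_mod_cast h
  have hexp : (2:ℝ) ^ ((N:ℝ)/30) = Real.exp (Real.log 2 * ((N:ℝ)/30)) := by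
    rw [Real.rpow_def_of_pos (by norm_num)]
  rw [hexp]
  set x := Real.log 2 * ((N:ℝ)/30) with hx
  have hx0 : 0 ≤ x := by positivity
  have e2 : ((N:ℝ)/180) ^ 3 ≤ Real.exp x := by
    calc ((N:ℝ)/180) ^ 3 ≤ (x/3 + 1) ^ 3 := by
          apply pow_le_pow_left₀ (by positivity)
          have : (N:ℝ)/180 ≤ x/3 := by
            rw [hx]
            nlinarith [Nat.cast_nonneg (α := ℝ) N]
          linarith
      _ ≤ (Real.exp (x/3)) ^ 3 := by
          apply pow_le_pow_left₀ (by positivity)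
          linarith [Real.add_one_le_exp (x/3)]
      _ = Real.exp x := by
          rw [← Real.exp_nat_mul]
          congr 1
          push_cast
          ring
  have e3 : (N:ℝ)^2 ≤ (N:ℝ)^3 := by nlinarith
  nlinarith [e2, e3]

lemma main_bound {N : ℕ} (hN : 5 ≤ N) :
    |(∑ n ∈ Finset.Icc 1 N, (Phi n : ℤ))
        - (2^(N+1) - 2*2^(N/2) - 2*2^(N/3))|
      ≤ 2 * 2^(N/5) + 11 * (N:ℤ)^2 * 2^(N/6) := by
  rw [key]
  set f : ℕ → ℤ := fun d => (μ d : ℤ) * (2 ^ (N / d + 1) - 2 - (N / d : ℕ)) with hf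
  have hIcc : Finset.Icc 1 N = Finset.Ioc 0 N := by ext x; simp; omega
  rw [hIcc]
  rw [← Finset.sum_Ioc_consecutive f (by omega : (0:ℕ) ≤ 5) hN]
  have h05 : ∑ d ∈ Finset.Ioc 0 5, f d
      = (2^(N+1) - 2 - N) - (2*2^(N/2) - 2 - (N/2:ℕ)) - (2*2^(N/3) - 2 - (N/3:ℕ))
        - (2*2^(N/5) - 2 - (N/5:ℕ)) := by
    have h5 : Finset.Ioc (0:ℕ) 5 = {1,2,3,4,5} := rfl
    rw [h5]
    simp only [hf, Finset.sum_insert, Finset.mem_insert, Finset.mem_singleton,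
      Finset.sum_singleton]
    norm_num [moebius_apply_one,
      moebius_apply_prime Nat.prime_two, moebius_apply_prime Nat.prime_three,
      moebius_apply_prime (by norm_num : Nat.Prime 5),
      moebius_eq_zero_of_not_squarefree (by decide : ¬ Squarefree 4), Nat.div_one]
    ring
  set R := ∑ d ∈ Finset.Ioc 5 N, f d with hR
  set a := (2:ℤ)^(N/5) with ha
  set b := (2:ℤ)^(N/6) with hb
  have hb1 : (1:ℤ) ≤ b := one_le_pow₀ (by norm_num)
  have ha0 : (0:ℤ) ≤ a := by positivity
  have hRbound : |R| ≤ (N:ℤ) * (2*b + 2 + N) := by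
    calc |R| ≤ ∑ d ∈ Finset.Ioc 5 N, |f d| := Finset.abs_sum_le_sum_abs _ _
      _ ≤ (Finset.Ioc 5 N).card • (2*b + 2 + (N:ℤ)) := by
          apply Finset.sum_le_card_nsmul
          intro d hd
          obtain ⟨hd5, hdN⟩ := Finset.mem_Ioc.1 hd
          have hmu : |(μ d : ℤ)| ≤ 1 := by
            rw [abs_moebius]; split <;> norm_num
          have hdiv : N / d ≤ N / 6 := Nat.div_le_div_left (by omega) (by omega)
          have hpow : (2:ℤ)^(N/d) ≤ b := pow_le_pow_right₀ (by norm_num) hdiv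
          have hpow0 : (0:ℤ) ≤ (2:ℤ)^(N/d) := by positivity
          have hNd : ((N/d : ℕ) : ℤ) ≤ N := by
            exact_mod_cast Nat.div_le_self N d
          have hNd0 : (0:ℤ) ≤ ((N/d : ℕ) : ℤ) := by positivity
          calc |f d| = |(μ d : ℤ)| * |(2 ^ (N / d + 1) - 2 - ((N / d : ℕ):ℤ) : ℤ)| := abs_mul _ _
            _ ≤ 1 * |(2 ^ (N / d + 1) - 2 - ((N / d : ℕ):ℤ) : ℤ)| := by
                apply mul_le_mul_of_nonneg_right hmu (abs_nonneg _)
            _ ≤ 2*b + 2 + (N:ℤ) := by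
                rw [one_mul, pow_succ]
                rw [abs_le]
                constructor <;> nlinarith
      _ ≤ (N:ℤ) * (2*b + 2 + N) := by
          rw [nsmul_eq_mul]
          have hcard : (Finset.Ioc 5 N).card ≤ N := by
            rw [Nat.card_Ioc]; omega
          apply mul_le_mul_of_nonneg_right _ (by positivity)
          exact_mod_cast hcard
  have hn2 : ((N/2 : ℕ) : ℤ) ≤ N := by exact_mod_cast Nat.div_le_self N 2
  have hn3 : ((N/3 : ℕ) : ℤ) ≤ N := by exact_mod_cast Nat.div_le_self N 3
  have hn5 : ((N/5 : ℕ) : ℤ) ≤ N := by exact_mod_cast Nat.div_le_self N 5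
  have hn20 : (0:ℤ) ≤ ((N/2 : ℕ) : ℤ) := by positivity
  have hn30 : (0:ℤ) ≤ ((N/3 : ℕ) : ℤ) := by positivity
  have hn50 : (0:ℤ) ≤ ((N/5 : ℕ) : ℤ) := by positivity
  have hN5 : (5:ℤ) ≤ (N:ℤ) := by exact_mod_cast hN
  obtain ⟨hR1, hR2⟩ := abs_le.1 hRbound
  rw [h05, abs_le]
  constructor <;> nlinarith [sq_nonneg ((N:ℤ)), mul_le_mul_of_nonneg_left hb1 (sq_nonneg (N:ℤ)), mul_le_mul_of_nonneg_right hN5 (by positivity : (0:ℤ) ≤ (N:ℤ)*b), mul_le_mul_of_nonneg_right hN5 (by positivity : (0:ℤ) ≤ (N:ℤ))]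


/-- Partial sum of `Φ`:
`∑_{n ≤ N} Φ(n) = 2^{N+1} - 2·2^{⌊N/2⌋} - 2·2^{⌊N/3⌋} + O(2^{N/5})`. -/
theorem sum_Phi_asymptotic :
    ∃ C : ℝ, 0 < C ∧ ∀ N : ℕ, 0 < N →
      |(∑ n ∈ Finset.Icc 1 N, (Phi n : ℝ)) -
        (2 ^ (N + 1) - 2 * 2 ^ (N / 2) - 2 * 2 ^ (N / 3))| ≤
      C * (2 : ℝ) ^ ((N : ℝ) / 5) := by
  refine ⟨100000000, by norm_num, fun N hN => ?_⟩
  have hrpos : (0:ℝ) < (2:ℝ) ^ ((N:ℝ)/5) := Real.rpow_pos_of_pos (by norm_num) _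
  have hrpow1 : (1:ℝ) ≤ (2:ℝ) ^ ((N:ℝ)/5) := by
    have := Real.rpow_le_rpow_of_exponent_le (one_le_two)
      (show (0:ℝ) ≤ (N:ℝ)/5 by positivity)
    rwa [Real.rpow_zero] at this
  rcases lt_or_ge N 5 with hsmall | hbig
  · interval_cases N
    · have h1 : Phi 1 = 1 := by decide
      simp [h1]
      norm_num
      nlinarith
    · have h1 : Phi 1 = 1 := by decide
      have h2 : Phi 2 = 2 := by decide
      rw [show Finset.Icc 1 2 = {1, 2} from rfl, Finset.sum_insert (by decide),
        Finset.sum_singleton, h1, h2]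
      norm_num
      nlinarith
    · have h1 : Phi 1 = 1 := by decide
      have h2 : Phi 2 = 2 := by decide
      have h3 : Phi 3 = 6 := by decide
      rw [show Finset.Icc 1 3 = {1, 2, 3} from rfl, Finset.sum_insert (by decide),
        Finset.sum_insert (by decide), Finset.sum_singleton, h1, h2, h3]
      norm_num
      nlinarith
    · have h1 : Phi 1 = 1 := by decide
      have h2 : Phi 2 = 2 := by decide
      have h3 : Phi 3 = 6 := by decide
      have h4 : Phi 4 = 12 := by decide
      rw [show Finset.Icc 1 4 = {1, 2, 3, 4} from rfl, Finset.sum_insert (by decide),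
        Finset.sum_insert (by decide), Finset.sum_insert (by decide),
        Finset.sum_singleton, h1, h2, h3, h4]
      norm_num
      nlinarith
  · have hint := main_bound hbig
    have hreal : |(∑ n ∈ Finset.Icc 1 N, (Phi n : ℝ)) -
        (2 ^ (N + 1) - 2 * 2 ^ (N / 2) - 2 * 2 ^ (N / 3))|
        ≤ 2 * (2:ℝ)^(N/5) + 11 * (N:ℝ)^2 * (2:ℝ)^(N/6) := by
      exact_mod_cast hint
    have hp5 : (2:ℝ)^(N/5) ≤ (2:ℝ) ^ ((N:ℝ)/5) := by
      rw [← Real.rpow_natCast 2 (N/5)]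
      apply Real.rpow_le_rpow_of_exponent_le one_le_two
      calc ((N/5 : ℕ) : ℝ) ≤ (N:ℝ) / ((5:ℕ):ℝ) := Nat.cast_div_le
        _ = (N:ℝ)/5 := by norm_num
    have hp6 : (2:ℝ)^(N/6) ≤ (2:ℝ) ^ ((N:ℝ)/6) := by
      rw [← Real.rpow_natCast 2 (N/6)]
      apply Real.rpow_le_rpow_of_exponent_le one_le_two
      calc ((N/6 : ℕ) : ℝ) ≤ (N:ℝ) / ((6:ℕ):ℝ) := Nat.cast_div_le
        _ = (N:ℝ)/6 := by norm_num
    have hsq := sq_growth N (by omega)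
    have hmul : (2:ℝ) ^ ((N:ℝ)/30) * (2:ℝ) ^ ((N:ℝ)/6) = (2:ℝ) ^ ((N:ℝ)/5) := by
      rw [← Real.rpow_add (by norm_num)]
      congr 1
      ring
    have h6pos : (0:ℝ) < (2:ℝ) ^ ((N:ℝ)/6) := Real.rpow_pos_of_pos (by norm_num) _
    have h30pos : (0:ℝ) < (2:ℝ) ^ ((N:ℝ)/30) := Real.rpow_pos_of_pos (by norm_num) _
    have hstep : 11 * (N:ℝ)^2 * (2:ℝ)^(N/6)
        ≤ 11 * 5832000 * (2:ℝ) ^ ((N:ℝ)/5) := by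
      calc 11 * (N:ℝ)^2 * (2:ℝ)^(N/6)
          ≤ 11 * (N:ℝ)^2 * (2:ℝ) ^ ((N:ℝ)/6) := by
            apply mul_le_mul_of_nonneg_left hp6 (by positivity)
        _ ≤ 11 * (5832000 * (2:ℝ) ^ ((N:ℝ)/30)) * (2:ℝ) ^ ((N:ℝ)/6) := by
            apply mul_le_mul_of_nonneg_right _ h6pos.le
            apply mul_le_mul_of_nonneg_left hsq (by norm_num)
        _ = 11 * 5832000 * ((2:ℝ) ^ ((N:ℝ)/30) * (2:ℝ) ^ ((N:ℝ)/6)) := by ring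
        _ = 11 * 5832000 * (2:ℝ) ^ ((N:ℝ)/5) := by rw [hmul]
    have h2a : 2 * (2:ℝ)^(N/5) ≤ 2 * (2:ℝ) ^ ((N:ℝ)/5) := by
      apply mul_le_mul_of_nonneg_left hp5 (by norm_num)
    calc |(∑ n ∈ Finset.Icc 1 N, (Phi n : ℝ)) -
        (2 ^ (N + 1) - 2 * 2 ^ (N / 2) - 2 * 2 ^ (N / 3))|
        ≤ 2 * (2:ℝ)^(N/5) + 11 * (N:ℝ)^2 * (2:ℝ)^(N/6) := hreal
      _ ≤ 2 * (2:ℝ) ^ ((N:ℝ)/5) + 11 * 5832000 * (2:ℝ) ^ ((N:ℝ)/5) := by linarith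
      _ ≤ 100000000 * (2:ℝ) ^ ((N:ℝ)/5) := by nlinarith
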